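/- Let w^(1), ..., w^(N) be filters of an LCN with architecture (d, k, s), and let v be the final filter of the composed convolution with width k_v. Then the polynomial p_{k_v - 1}(v)(x) = Σ_{j=0}^{k_v - 1} v_{j+1} x^j factorizes as the product over i = 1,...,N of the polynomials p̃_i(x) = Σ_{j=0}^{k_i - 1} w^(i)_{j+1} · x^{j · Π_{n=1}^{i-1} s_n}. -/

import Mathlib

/-- A convolution (no padding) with filter `w`, width `k` and stride `s`. -/
def convMap (k s : ℕ) (w : ℕ → ℝ) (x : ℕ → ℝ) : ℕ → ℝ :=
  fun j => ∑ n ∈ Finset.range k, w n * x (j * s + n)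

/-- The composition `α_{N-1} ∘ ⋯ ∘ α_0` of the first `N` convolutional layers. -/
def convComp (k s : ℕ → ℕ) (w : ℕ → ℕ → ℝ) : ℕ → (ℕ → ℝ) → (ℕ → ℝ)
  | 0 => id
  | N + 1 => fun x => convMap (k N) (s N) (w N) (convComp k s w N x)

/-- The polynomial `p̃_i(x) = ∑_{j<k_i} w^(i)_{j+1} x^{j ∏_{n<i} s_n}` associated
with the `i`-th layer filter. -/
noncomputable def lcnPoly (k s : ℕ → ℕ) (w : ℕ → ℕ → ℝ) (i : ℕ) : Polynomial ℝ :=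
  ∑ j ∈ Finset.range (k i),
    Polynomial.C (w i j) * Polynomial.X ^ (j * ∏ m ∈ Finset.range i, s m)

lemma convComp_pow (k s : ℕ → ℕ) (w : ℕ → ℕ → ℝ) (t : ℝ) :
    ∀ N j, convComp k s w N (fun n => t ^ n) j =
      t ^ (j * ∏ i ∈ Finset.range N, s i) *
        ∏ i ∈ Finset.range N, (lcnPoly k s w i).eval t := by
  intro N
  induction N with
  | zero => intro j; simp [convComp]
  | succ N ih =>
    intro j
    simp only [convComp, convMap, ih, Finset.prod_range_succ]
    have hev : Polynomial.eval t (lcnPoly k s w N) =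
        ∑ n ∈ Finset.range (k N), w N n * t ^ (n * ∏ i ∈ Finset.range N, s i) := by
      simp [lcnPoly, Polynomial.eval_finset_sum]
    rw [hev, Finset.mul_sum, Finset.mul_sum]
    apply Finset.sum_congr rfl
    intro n _
    rw [show (j * s N + n) * ∏ i ∈ Finset.range N, s i =
        j * ((∏ i ∈ Finset.range N, s i) * s N) + n * ∏ i ∈ Finset.range N, s i by ring,
      pow_add]
    ring

/-- If `v` is the final filter of the composed convolution (of width `k_v`),
then the polynomial `∑_{j<k_v} v_{j+1} x^j` factorizes as the product of the
layer polynomials `p̃_i`. -/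
theorem stmt_5 (N : ℕ) (hN : 1 ≤ N) (k s : ℕ → ℕ)
    (hk : ∀ i, 1 ≤ k i) (hs : ∀ i, 1 ≤ s i) (w : ℕ → ℕ → ℝ)
    (kv : ℕ)
    (hkv : kv = k 0 + ∑ i ∈ Finset.Ico 1 N, (k i - 1) * ∏ m ∈ Finset.range i, s m)
    (v : ℕ → ℝ)
    (hv : ∀ x j, convComp k s w N x j =
      ∑ n ∈ Finset.range kv, v n * x (j * (∏ i ∈ Finset.range N, s i) + n)) :
    ∑ j ∈ Finset.range kv, Polynomial.C (v j) * Polynomial.X ^ j =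
      ∏ i ∈ Finset.range N, lcnPoly k s w i := by
  apply Polynomial.funext
  intro t
  have h := hv (fun n => t ^ n) 0
  rw [convComp_pow] at h
  simp only [zero_mul, pow_zero, one_mul, zero_add] at h
  rw [Polynomial.eval_finset_sum, Polynomial.eval_prod, h]
  simp
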